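/- Let K_p be a symmetric 2×2 real matrix for which there exists λ₀ > 0 with xᵀ·K_p·x ≥ λ₀·‖x‖² for all x ∈ ℝ², let r : ℝ → ℝ be any function, and let d : ℝ → ℝ² satisfy ‖d(t)‖ ≤ c_d·e^{−λ_d·t} for all t ≥ 0, where c_d ≥ 0 and λ_d > 0. If z : ℝ → ℝ² is differentiable and satisfies z′(t) = −K_p·z(t) − r(t)·S·z(t) + d(t) for all t ≥ 0, then there exist constants c′ > 0 and λ′ > 0 (depending only on λ₀ and λ_d) such that ‖z(t)‖ ≤ c′·e^{−λ′·t}·(‖z(0)‖ + c_d) for all t ≥ 0. -/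

import Mathlib

open Matrix

/-- The 2×2 skew-symmetric matrix `S = [[0,-1],[1,0]]`. -/
def Smat : Matrix (Fin 2) (Fin 2) ℝ := !![0, -1; 1, 0]

set_option maxHeartbeats 1000000 in
/-- Cascade step: the kinematic error system `z' = -K_p z - r S z + d`, driven by an
exponentially decaying perturbation `d`, converges exponentially with constants depending
only on `λ₀` and `λ_d` (the skew term does not affect `‖z‖`). -/
theorem cascade_exponential_convergence (lam₀ lam_d : ℝ) (hlam₀ : 0 < lam₀)
    (hlam_d : 0 < lam_d) :
    ∃ c' > (0 : ℝ), ∃ lam' > (0 : ℝ),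
      ∀ K : Matrix (Fin 2) (Fin 2) ℝ, K.IsSymm →
        (∀ x : Fin 2 → ℝ, lam₀ * (x ⬝ᵥ x) ≤ x ⬝ᵥ K.mulVec x) →
        ∀ r : ℝ → ℝ, ∀ c_d : ℝ, 0 ≤ c_d →
          ∀ d : ℝ → Fin 2 → ℝ,
            (∀ t : ℝ, 0 ≤ t → Real.sqrt (d t ⬝ᵥ d t) ≤ c_d * Real.exp (-lam_d * t)) →
            ∀ z : ℝ → Fin 2 → ℝ, Differentiable ℝ z →
              (∀ t : ℝ, 0 ≤ t →
                deriv z t = -(K.mulVec (z t)) - r t • Smat.mulVec (z t) + d t) →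
              ∀ t : ℝ, 0 ≤ t →
                Real.sqrt (z t ⬝ᵥ z t)
                  ≤ c' * Real.exp (-lam' * t) * (Real.sqrt (z 0 ⬝ᵥ z 0) + c_d) := by
  obtain ⟨μ, hμdef⟩ : ∃ μ : ℝ, μ = min lam₀ lam_d := ⟨_, rfl⟩
  have hμ : 0 < μ := hμdef ▸ lt_min hlam₀ hlam_d
  have hμlam : μ ≤ lam₀ := hμdef ▸ min_le_left _ _
  have hμlamd : μ ≤ lam_d := hμdef ▸ min_le_right _ _
  refine ⟨1 + (Real.sqrt (lam₀ * μ))⁻¹, by positivity, μ / 2, by positivity,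
    fun K _hKsym hKpos r c_d hc_d d hd z hz hode t ht => ?_⟩
  -- u = ‖z‖²
  obtain ⟨u, hus⟩ : ∃ u : ℝ → ℝ, ∀ s, u s = z s 0 * z s 0 + z s 1 * z s 1 :=
    ⟨_, fun _ => rfl⟩
  have hufun : u = fun s => z s 0 * z s 0 + z s 1 * z s 1 := funext hus
  have hu_nonneg : ∀ s, 0 ≤ u s := fun s => by
    rw [hus]; exact add_nonneg (mul_self_nonneg _) (mul_self_nonneg _)
  have hdot : ∀ s, z s ⬝ᵥ z s = u s := fun s => by
    rw [hus]; simp [dotProduct, Fin.sum_univ_two]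
  -- derivative of coordinates
  have hzi : ∀ (s : ℝ) (i : Fin 2), HasDerivAt (fun w => z w i) (deriv z s i) s :=
    fun s i => (hasDerivAt_pi.1 (hz s).hasDerivAt) i
  have hu' : ∀ s, HasDerivAt u
      (2 * (z s 0 * deriv z s 0 + z s 1 * deriv z s 1)) s := by
    intro s
    rw [hufun]
    have h0 := ((hzi s 0).mul (hzi s 0)).add ((hzi s 1).mul (hzi s 1))
    convert h0 using 1
    · rfl
    · rfl
    · rfl
    · ring
  obtain ⟨C, hCdef⟩ : ∃ C : ℝ, C = c_d ^ 2 / lam₀ := ⟨_, rfl⟩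
  have hC : 0 ≤ C := by rw [hCdef]; positivity
  -- the key differential inequality: u' ≤ -μ u + C e^{-2μ s} for s ≥ 0
  have hkey : ∀ s : ℝ, 0 ≤ s →
      2 * (z s 0 * deriv z s 0 + z s 1 * deriv z s 1)
        ≤ -μ * u s + C * Real.exp (-(2*μ) * s) := by
    intro s hs
    have hzs := hode s hs
    have h0 : deriv z s 0 = -(K 0 0 * z s 0 + K 0 1 * z s 1) - r s * (-(z s 1)) + d s 0 := by
      rw [hzs]
      simp [Matrix.mulVec, Smat, dotProduct, Fin.sum_univ_two, Matrix.vecHead, Matrix.vecTail]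
    have h1 : deriv z s 1 = -(K 1 0 * z s 0 + K 1 1 * z s 1) - r s * (z s 0) + d s 1 := by
      rw [hzs]
      simp [Matrix.mulVec, Smat, dotProduct, Fin.sum_univ_two, Matrix.vecHead, Matrix.vecTail]
    have hK := hKpos (z s)
    rw [hdot s] at hK
    have hKexp : z s ⬝ᵥ K.mulVec (z s)
        = z s 0 * (K 0 0 * z s 0 + K 0 1 * z s 1) + z s 1 * (K 1 0 * z s 0 + K 1 1 * z s 1) := by
      simp [dotProduct, Matrix.mulVec, Fin.sum_univ_two]
    rw [hKexp] at hK
    -- bound on d⬝d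
    have hdd' : d s ⬝ᵥ d s = d s 0 * d s 0 + d s 1 * d s 1 := by
      simp [dotProduct, Fin.sum_univ_two]
    have hdd : d s 0 * d s 0 + d s 1 * d s 1 ≤ c_d ^ 2 * Real.exp (-(2*lam_d) * s) := by
      have h := hd s hs
      have hddnn : (0:ℝ) ≤ d s ⬝ᵥ d s := by
        rw [hdd']; exact add_nonneg (mul_self_nonneg _) (mul_self_nonneg _)
      have hsq := Real.sq_sqrt hddnn
      have h2 : (Real.sqrt (d s ⬝ᵥ d s))^2 ≤ (c_d * Real.exp (-lam_d * s))^2 := by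
        apply sq_le_sq' _ h
        have := Real.sqrt_nonneg (d s ⬝ᵥ d s)
        nlinarith
      rw [hsq, hdd'] at h2
      have h3 : (c_d * Real.exp (-lam_d * s))^2 = c_d ^ 2 * Real.exp (-(2*lam_d) * s) := by
        rw [mul_pow, sq (Real.exp _), ← Real.exp_add]
        ring_nf
      linarith [h3 ▸ h2]
    -- Young: 2 z⬝d ≤ lam₀ u + (1/lam₀)(d⬝d)
    have hyoung : 2 * (z s 0 * d s 0 + z s 1 * d s 1)
        ≤ lam₀ * u s + (1/lam₀) * (d s 0 * d s 0 + d s 1 * d s 1) := by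
      rw [hus]
      rw [← mul_le_mul_iff_right₀ hlam₀]
      have h : lam₀ * (lam₀ * (z s 0 * z s 0 + z s 1 * z s 1)
            + 1/lam₀ * (d s 0 * d s 0 + d s 1 * d s 1))
          = lam₀ * (lam₀ * (z s 0 * z s 0 + z s 1 * z s 1))
            + (d s 0 * d s 0 + d s 1 * d s 1) := by
        field_simp
      rw [h]
      nlinarith [sq_nonneg (lam₀ * z s 0 - d s 0), sq_nonneg (lam₀ * z s 1 - d s 1)]
    have hexp : Real.exp (-(2*lam_d) * s) ≤ Real.exp (-(2*μ) * s) := by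
      apply Real.exp_le_exp.2
      nlinarith
    have huu := hu_nonneg s
    have hqd : -2 * (z s 0 * (K 0 0 * z s 0 + K 0 1 * z s 1)
        + z s 1 * (K 1 0 * z s 0 + K 1 1 * z s 1)) ≤ -2 * (lam₀ * u s) := by linarith
    have hdds : (1/lam₀) * (d s 0 * d s 0 + d s 1 * d s 1)
        ≤ (1/lam₀) * (c_d ^ 2 * Real.exp (-(2*lam_d) * s)) :=
      mul_le_mul_of_nonneg_left hdd (by positivity)
    have hexp2 : (1/lam₀) * (c_d ^ 2 * Real.exp (-(2*lam_d) * s))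
        ≤ C * Real.exp (-(2*μ) * s) := by
      rw [hCdef]
      have h := mul_le_mul_of_nonneg_left hexp (show (0:ℝ) ≤ c_d ^ 2 / lam₀ by positivity)
      have heq : (1/lam₀) * (c_d ^ 2 * Real.exp (-(2*lam_d) * s))
          = c_d ^ 2 / lam₀ * Real.exp (-(2*lam_d) * s) := by ring
      linarith [heq]
    have hμu : -(lam₀ * u s) ≤ -(μ * u s) := by nlinarith
    calc 2 * (z s 0 * deriv z s 0 + z s 1 * deriv z s 1)
        = -2 * (z s 0 * (K 0 0 * z s 0 + K 0 1 * z s 1)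
            + z s 1 * (K 1 0 * z s 0 + K 1 1 * z s 1))
          + 2 * (z s 0 * d s 0 + z s 1 * d s 1) := by rw [h0, h1]; ring
      _ ≤ -μ * u s + C * Real.exp (-(2*μ) * s) := by nlinarith
  -- Lyapunov-type function g
  set g : ℝ → ℝ := fun s => Real.exp (μ * s) * u s + (C / μ) * Real.exp (-μ * s) with hgdef
  have hg' : ∀ s, HasDerivAt g
      (μ * Real.exp (μ * s) * u s
        + Real.exp (μ * s) * (2 * (z s 0 * deriv z s 0 + z s 1 * deriv z s 1))
        + (C / μ) * (-μ * Real.exp (-μ * s))) s := by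
    intro s
    have he : HasDerivAt (fun w => Real.exp (μ * w)) (μ * Real.exp (μ * s)) s := by
      have h := HasDerivAt.exp ((hasDerivAt_id s).const_mul μ)
      convert h using 1
      show _ = Real.exp (μ * s) * (μ * 1)
      ring
      rfl
    have he2 : HasDerivAt (fun w => Real.exp (-μ * w)) (-μ * Real.exp (-μ * s)) s := by
      have h := HasDerivAt.exp ((hasDerivAt_id s).const_mul (-μ))
      convert h using 1
      show _ = Real.exp (-μ * s) * (-μ * 1)
      ring
      rfl
    have h := (he.mul (hu' s)).add (he2.const_mul (C / μ))
    convert h using 1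
    try ring
    all_goals rfl
  have hg_anti : AntitoneOn g (Set.Ici (0:ℝ)) := by
    apply antitoneOn_of_deriv_nonpos (convex_Ici 0)
    · exact fun s _ => ((hg' s).continuousAt).continuousWithinAt
    · exact fun s _ => ((hg' s).differentiableAt).differentiableWithinAt
    · intro s hs
      rw [interior_Ici] at hs
      rw [(hg' s).deriv]
      have hk := hkey s (le_of_lt hs)
      have hepos : (0:ℝ) < Real.exp (μ * s) := Real.exp_pos _
      have h2 : Real.exp (μ * s) * (2 * (z s 0 * deriv z s 0 + z s 1 * deriv z s 1))
          ≤ Real.exp (μ * s) * (-μ * u s + C * Real.exp (-(2*μ) * s)) :=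
        mul_le_mul_of_nonneg_left hk (le_of_lt hepos)
      have h3 : Real.exp (μ * s) * (C * Real.exp (-(2*μ) * s)) = C * Real.exp (-μ * s) := by
        rw [mul_comm C, ← mul_assoc, ← Real.exp_add]
        ring_nf
      have h4 : Real.exp (μ * s) * (-μ * u s + C * Real.exp (-(2*μ) * s))
          = -(μ * Real.exp (μ * s) * u s) + C * Real.exp (-μ * s) := by
        rw [mul_add, h3]; ring
      have h5 : (C / μ) * (-μ * Real.exp (-μ * s)) = -(C * Real.exp (-μ * s)) := by
        field_simp
      rw [h4] at h2
      linarith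
  -- conclude: g t ≤ g 0
  have hgt : g t ≤ g 0 := hg_anti Set.self_mem_Ici (Set.mem_Ici.2 ht) ht
  have hg0 : g 0 = u 0 + C / μ := by simp [hgdef]
  have hbound : u t ≤ Real.exp (-μ * t) * (u 0 + C / μ) := by
    have h1 : Real.exp (μ * t) * u t ≤ u 0 + C / μ := by
      have h2 : (0:ℝ) ≤ (C / μ) * Real.exp (-μ * t) := by positivity
      rw [hg0] at hgt
      simp only [hgdef] at hgt
      linarith
    have h3 : Real.exp (-μ * t) * Real.exp (μ * t) = 1 := by
      rw [← Real.exp_add]; ring_nf; exact Real.exp_zero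
    calc u t = Real.exp (-μ * t) * Real.exp (μ * t) * u t := by rw [h3, one_mul]
      _ = Real.exp (-μ * t) * (Real.exp (μ * t) * u t) := by ring
      _ ≤ Real.exp (-μ * t) * (u 0 + C / μ) :=
          mul_le_mul_of_nonneg_left h1 (le_of_lt (Real.exp_pos _))
  -- take square roots
  rw [hdot t, hdot 0]
  have hs1 : Real.sqrt (u t) ≤ Real.sqrt (Real.exp (-μ * t) * (u 0 + C / μ)) :=
    Real.sqrt_le_sqrt hbound
  have hs2 : Real.sqrt (Real.exp (-μ * t) * (u 0 + C / μ))
      = Real.exp (-(μ/2) * t) * Real.sqrt (u 0 + C / μ) := by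
    rw [Real.sqrt_mul (le_of_lt (Real.exp_pos _))]
    congr 1
    rw [show -μ * t = (-(μ/2) * t) + (-(μ/2) * t) by ring, Real.exp_add,
      Real.sqrt_mul_self (le_of_lt (Real.exp_pos _))]
  have hsum_nonneg : (0:ℝ) ≤ C / μ := by positivity
  have hsq_add : Real.sqrt (u 0 + C / μ) ≤ Real.sqrt (u 0) + Real.sqrt (C / μ) := by
    rw [show Real.sqrt (u 0) + Real.sqrt (C / μ)
        = Real.sqrt ((Real.sqrt (u 0) + Real.sqrt (C / μ))^2) by
      rw [Real.sqrt_sq (by positivity)]]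
    apply Real.sqrt_le_sqrt
    nlinarith [Real.sq_sqrt (hu_nonneg 0), Real.sq_sqrt hsum_nonneg,
      Real.sqrt_nonneg (u 0), Real.sqrt_nonneg (C / μ),
      mul_nonneg (Real.sqrt_nonneg (u 0)) (Real.sqrt_nonneg (C / μ))]
  have hsqC : Real.sqrt (C / μ) = c_d * (Real.sqrt (lam₀ * μ))⁻¹ := by
    rw [show C / μ = c_d ^ 2 * (lam₀ * μ)⁻¹ by rw [hCdef, div_div, div_eq_mul_inv],
      Real.sqrt_mul (by positivity), Real.sqrt_sq hc_d, Real.sqrt_inv]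
  have hinv_nonneg : (0:ℝ) ≤ (Real.sqrt (lam₀ * μ))⁻¹ := by positivity
  have hfinal : Real.sqrt (u 0) + Real.sqrt (C / μ)
      ≤ (1 + (Real.sqrt (lam₀ * μ))⁻¹) * (Real.sqrt (u 0) + c_d) := by
    rw [hsqC]
    nlinarith [Real.sqrt_nonneg (u 0)]
  calc Real.sqrt (u t) ≤ Real.exp (-(μ/2) * t) * Real.sqrt (u 0 + C / μ) := by
        rw [← hs2]; exact hs1
    _ ≤ Real.exp (-(μ/2) * t) * ((1 + (Real.sqrt (lam₀ * μ))⁻¹) * (Real.sqrt (u 0) + c_d)) :=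
        mul_le_mul_of_nonneg_left (le_trans hsq_add hfinal) (le_of_lt (Real.exp_pos _))
    _ = (1 + (Real.sqrt (lam₀ * μ))⁻¹) * Real.exp (-(μ/2) * t) * (Real.sqrt (u 0) + c_d) := by
        ring
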